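/- Let 0 < a < b, α ∈ (0,1), n a positive integer, ΔT = ln(b/a)/n, t_k = a·exp(k·ΔT), and let x : [a,b] → ℝ be of class C² with M₁ = max |x'| and M₂ = max |x''| on [a,b]. Then for every N ∈ {1,…,n}, (1/Γ(1−α))·∑_{k=1}^{N} ∫_{t_{k−1}}^{t_k} (ln(t_N/τ))^{−α}·(1/τ)·| x'(τ)·τ − ((x(t_k) − x(t_{k−1}))/(t_k − t_{k−1}))·t_k | dτ ≤ ((M₁ + (3/2)·M₂·b)/Γ(2−α))·a·(ΔT)^{1−α}·(exp(N·ΔT) − 1). -/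

import Mathlib

open Real Set intervalIntegral

open MeasureTheory

private lemma sub_rpow_le_one {m p : ℝ} (hm : 0 ≤ m) (hp0 : 0 ≤ p) (hp1 : p ≤ 1) :
    (m + 1) ^ p - m ^ p ≤ 1 := by
  have h := NNReal.rpow_add_le_add_rpow m.toNNReal 1 hp0 hp1
  have h' := NNReal.coe_le_coe.2 h
  simp only [NNReal.coe_rpow, NNReal.coe_add, NNReal.coe_one, Real.coe_toNNReal m hm,
    Real.one_rpow] at h'
  linarith

private lemma final_algebra {G p D A E C : ℝ} (hG : G ≠ 0) (hp : p ≠ 0) :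
    1 / G * (C * D / p * (A * E)) = C * (A * D * E / (p * G)) := by
  field_simp

private lemma weight_int {α T u v : ℝ} (hα1 : α < 1)
    (hu : 0 < u) (huv : u ≤ v) (hvT : v ≤ T) :
    IntervalIntegrable (fun τ => (Real.log T - Real.log τ) ^ (-α) * τ⁻¹) volume u v ∧
    ∫ τ in u..v, (Real.log T - Real.log τ) ^ (-α) * τ⁻¹
      = ((Real.log T - Real.log u) ^ (1 - α) - (Real.log T - Real.log v) ^ (1 - α)) / (1 - α) := by
  set p : ℝ := 1 - α with hp
  have hppos : 0 < p := by simp [hp]; linarith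
  set g : ℝ → ℝ := fun τ => -((Real.log T - Real.log τ) ^ p / p) with hg
  have hgc : ContinuousOn g (Icc u v) := by
    apply ContinuousOn.neg
    apply ContinuousOn.div_const
    apply ContinuousOn.rpow_const
    · exact continuousOn_const.sub (Real.continuousOn_log.mono (fun τ hτ => by
        simp only [mem_compl_iff, mem_singleton_iff]
        exact ne_of_gt (lt_of_lt_of_le hu hτ.1)))
    · exact fun τ hτ => Or.inr hppos.le
  have hgd : ∀ τ ∈ Ioo u v, HasDerivAt g ((Real.log T - Real.log τ) ^ (-α) * τ⁻¹) τ := by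
    intro τ hτ
    have hτ0 : 0 < τ := lt_trans hu hτ.1
    have hLpos : 0 < Real.log T - Real.log τ :=
      sub_pos.mpr (Real.log_lt_log hτ0 (lt_of_lt_of_le hτ.2 hvT))
    have h1 : HasDerivAt (fun τ => Real.log T - Real.log τ) (-τ⁻¹) τ :=
      (Real.hasDerivAt_log (ne_of_gt hτ0)).const_sub _
    have h2 := (h1.rpow_const (p := p) (Or.inl (ne_of_gt hLpos)))
    have h3 := (h2.div_const p).neg
    refine h3.congr_deriv ?_
    have : p - 1 = -α := by simp [hp]
    rw [this]
    field_simp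
  have hnn : ∀ τ ∈ Ioo u v, 0 ≤ (Real.log T - Real.log τ) ^ (-α) * τ⁻¹ := by
    intro τ hτ
    have hτ0 : 0 < τ := lt_trans hu hτ.1
    have hLpos : 0 < Real.log T - Real.log τ :=
      sub_pos.mpr (Real.log_lt_log hτ0 (lt_of_lt_of_le hτ.2 hvT))
    exact mul_nonneg (Real.rpow_nonneg hLpos.le _) (inv_nonneg.mpr hτ0.le)
  have hint : IntervalIntegrable (fun τ => (Real.log T - Real.log τ) ^ (-α) * τ⁻¹) volume u v := by
    rw [intervalIntegrable_iff_integrableOn_Ioc_of_le huv]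
    exact intervalIntegral.integrableOn_deriv_of_nonneg hgc hgd hnn
  refine ⟨hint, ?_⟩
  rw [intervalIntegral.integral_eq_sub_of_hasDeriv_right_of_le huv hgc
    (fun τ hτ => (hgd τ hτ).hasDerivWithinAt) hint]
  simp only [hg]
  field_simp
  ring

/-- Bound for the aggregated quadrature error of the discretization of
the left Hadamard fractional derivative on the logarithmic grid. -/
theorem hadamard_quadrature_error_bound
    (a b α : ℝ) (ha : 0 < a) (hab : a < b) (hα : α ∈ Set.Ioo (0 : ℝ) 1)
    (n : ℕ) (hn : 0 < n)
    (x x' x'' : ℝ → ℝ)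
    (hx' : ∀ τ ∈ Set.Icc a b, HasDerivWithinAt x (x' τ) (Set.Icc a b) τ)
    (hx'' : ∀ τ ∈ Set.Icc a b, HasDerivWithinAt x' (x'' τ) (Set.Icc a b) τ)
    (hx''cont : ContinuousOn x'' (Set.Icc a b))
    (M₁ M₂ : ℝ)
    (hM₁ : IsGreatest ((fun τ => |x' τ|) '' Set.Icc a b) M₁)
    (hM₂ : IsGreatest ((fun τ => |x'' τ|) '' Set.Icc a b) M₂)
    (N : ℕ) (hN₁ : 1 ≤ N) (hNn : N ≤ n) :
    let ΔT : ℝ := Real.log (b / a) / n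
    let t : ℕ → ℝ := fun j => a * Real.exp (j * ΔT)
    (1 / Real.Gamma (1 - α)) * ∑ k ∈ Finset.Icc 1 N,
        ∫ τ in (t (k - 1))..(t k),
          Real.log (t N / τ) ^ (-α) * (1 / τ)
            * |x' τ * τ - (x (t k) - x (t (k - 1))) / (t k - t (k - 1)) * t k|
      ≤ (M₁ + (3 / 2) * M₂ * b) / Real.Gamma (2 - α)
          * a * ΔT ^ (1 - α) * (Real.exp (N * ΔT) - 1) := by
  obtain ⟨hα0, hα1⟩ := hα
  intro ΔT t
  have hΔTdef : ΔT = Real.log (b / a) / n := rfl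
  have ht : ∀ j : ℕ, t j = a * Real.exp (j * ΔT) := fun j => rfl
  have hb : 0 < b := lt_trans ha hab
  have hΔT : 0 < ΔT := by
    rw [hΔTdef]
    exact div_pos (Real.log_pos ((one_lt_div ha).mpr hab)) (Nat.cast_pos.mpr hn)
  have htpos : ∀ j : ℕ, 0 < t j := fun j => by rw [ht]; positivity
  have htle : ∀ i j : ℕ, i ≤ j → t i ≤ t j := by
    intro i j hij
    rw [ht, ht]
    have h1 : (i : ℝ) * ΔT ≤ (j : ℝ) * ΔT :=
      mul_le_mul_of_nonneg_right (by exact_mod_cast hij) hΔT.le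
    exact mul_le_mul_of_nonneg_left (Real.exp_le_exp.mpr h1) ha.le
  have htlt : ∀ i j : ℕ, i < j → t i < t j := by
    intro i j hij
    rw [ht, ht]
    have h1 : (i : ℝ) * ΔT < (j : ℝ) * ΔT :=
      mul_lt_mul_of_pos_right (by exact_mod_cast hij) hΔT
    exact mul_lt_mul_of_pos_left (Real.exp_lt_exp.mpr h1) ha
  have ht0 : t 0 = a := by rw [ht]; simp
  have htn : t n = b := by
    rw [ht, hΔTdef, mul_div_cancel₀ _ (by exact_mod_cast hn.ne' : (n : ℝ) ≠ 0),
      Real.exp_log (div_pos hb ha)]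
    field_simp
  have hlogt : ∀ j : ℕ, Real.log (t j) = Real.log a + j * ΔT := by
    intro j; rw [ht, Real.log_mul (ne_of_gt ha) (Real.exp_ne_zero _), Real.log_exp]
  have hx'cont : ContinuousOn x' (Icc a b) :=
    fun τ hτ => ((hx'' τ hτ).differentiableWithinAt).continuousWithinAt
  have hxcont : ContinuousOn x (Icc a b) :=
    fun τ hτ => ((hx' τ hτ).differentiableWithinAt).continuousWithinAt
  have hM1b : ∀ τ ∈ Icc a b, |x' τ| ≤ M₁ := fun τ hτ => hM₁.2 ⟨τ, hτ, rfl⟩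
  have hM2b : ∀ τ ∈ Icc a b, |x'' τ| ≤ M₂ := fun τ hτ => hM₂.2 ⟨τ, hτ, rfl⟩
  have hM1nn : 0 ≤ M₁ := by obtain ⟨c, hc, rfl⟩ := hM₁.1; exact abs_nonneg _
  have hM2nn : 0 ≤ M₂ := by obtain ⟨c, hc, rfl⟩ := hM₂.1; exact abs_nonneg _
  set p : ℝ := 1 - α with hpdef
  have hppos : 0 < p := by rw [hpdef]; linarith
  have hΓ1 : 0 < Real.Gamma p := Real.Gamma_pos_of_pos hppos
  have hΓ2 : Real.Gamma (2 - α) = p * Real.Gamma p := by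
    have h2 : (2 : ℝ) - α = p + 1 := by rw [hpdef]; ring
    rw [h2, Real.Gamma_add_one (ne_of_gt hppos)]
  set C' : ℝ := M₁ + M₂ * b with hC'
  have hC'nn : 0 ≤ C' := add_nonneg hM1nn (mul_nonneg hM2nn hb.le)
  -- per-term bound
  have key : ∀ k ∈ Finset.Icc 1 N,
      (∫ τ in (t (k - 1))..(t k), Real.log (t N / τ) ^ (-α) * (1 / τ)
        * |x' τ * τ - (x (t k) - x (t (k - 1))) / (t k - t (k - 1)) * t k|)
      ≤ C' * ΔT ^ p / p * (t k - t (k - 1)) := by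
    intro k hk
    obtain ⟨hk1, hkN⟩ := Finset.mem_Icc.mp hk
    set u := t (k - 1) with hu
    set v := t k with hv
    have hk1' : k - 1 < k := Nat.sub_lt (lt_of_lt_of_le Nat.one_pos hk1) Nat.one_pos
    have huv : u < v := htlt _ _ hk1'
    have hau : a ≤ u := ht0 ▸ htle 0 (k - 1) (Nat.zero_le _)
    have hvN : v ≤ t N := htle k N hkN
    have hvb : v ≤ b := htn ▸ htle k n (le_trans hkN hNn)
    have hu0 : 0 < u := lt_of_lt_of_le ha hau
    have hIccsub : Icc u v ⊆ Icc a b := Icc_subset_Icc hau hvb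
    have hIoosub : Ioo u v ⊆ Ioo a b := Ioo_subset_Ioo hau hvb
    obtain ⟨ξ, hξmem, hξ⟩ := exists_hasDerivAt_eq_slope x x' huv (hxcont.mono hIccsub)
      (fun τ hτ => (hx' τ (Ioo_subset_Icc_self (hIoosub hτ))).hasDerivAt
        (Icc_mem_nhds (hIoosub hτ).1 (hIoosub hτ).2))
    have hξI : ξ ∈ Icc a b := Ioo_subset_Icc_self (hIoosub hξmem)
    have hpt : ∀ τ ∈ Icc u v, |x' τ * τ - (x v - x u) / (v - u) * v| ≤ C' * (v - u) := by
      intro τ hτ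
      rw [← hξ]
      have hτab : τ ∈ Icc a b := hIccsub hτ
      have lip : |x' τ - x' ξ| ≤ M₂ * |τ - ξ| := by
        have := (convex_Icc a b).norm_image_sub_le_of_norm_hasDerivWithin_le hx''
          (fun y hy => by rw [Real.norm_eq_abs]; exact hM2b y hy) hξI hτab
        simpa [Real.norm_eq_abs] using this
      have h1 : |τ - ξ| ≤ v - u := by
        rw [abs_sub_le_iff]
        constructor <;> [skip; skip] <;>
          · have := hξmem.1.le; have := hξmem.2.le; have := hτ.1; have := hτ.2; linarith
      have h2 : |τ| ≤ b := by
        rw [abs_of_pos (lt_of_lt_of_le ha hτab.1)]; exact hτab.2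
      have h3 : |τ - v| ≤ v - u := by
        rw [abs_sub_le_iff]
        constructor <;> · have := hτ.1; have := hτ.2; linarith
      have h4 : |x' ξ| ≤ M₁ := hM1b ξ hξI
      have heq : x' τ * τ - x' ξ * v = (x' τ - x' ξ) * τ + x' ξ * (τ - v) := by ring
      have hvu : (0:ℝ) ≤ v - u := by linarith
      calc |x' τ * τ - x' ξ * v| = |(x' τ - x' ξ) * τ + x' ξ * (τ - v)| := by rw [heq]
        _ ≤ |(x' τ - x' ξ) * τ| + |x' ξ * (τ - v)| := abs_add_le _ _
        _ = |x' τ - x' ξ| * |τ| + |x' ξ| * |τ - v| := by rw [abs_mul, abs_mul]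
        _ ≤ (M₂ * (v - u)) * b + M₁ * (v - u) := by
            apply add_le_add
            · exact mul_le_mul (lip.trans (mul_le_mul_of_nonneg_left h1 hM2nn)) h2
                (abs_nonneg _) (mul_nonneg hM2nn hvu)
            · exact mul_le_mul h4 h3 (abs_nonneg _) hM1nn
        _ = C' * (v - u) := by rw [hC']; ring
    have hTpos : 0 < t N := htpos N
    set W : ℝ → ℝ := fun τ => (Real.log (t N) - Real.log τ) ^ (-α) * τ⁻¹ with hW
    obtain ⟨hWint, hWval⟩ := weight_int hα1 hu0 huv.le hvN
    have hWnn : ∀ τ ∈ Icc u v, 0 ≤ W τ := by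
      intro τ hτ
      have hτ0 : 0 < τ := lt_of_lt_of_le hu0 hτ.1
      have hL : 0 ≤ Real.log (t N) - Real.log τ :=
        sub_nonneg.mpr (Real.log_le_log hτ0 (le_trans hτ.2 hvN))
      exact mul_nonneg (Real.rpow_nonneg hL _) (inv_nonneg.mpr hτ0.le)
    have hcongr : (∫ τ in u..v, Real.log (t N / τ) ^ (-α) * (1 / τ)
          * |x' τ * τ - (x v - x u) / (v - u) * v|)
        = ∫ τ in u..v, W τ * |x' τ * τ - (x v - x u) / (v - u) * v| := by
      apply intervalIntegral.integral_congr
      intro τ hτ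
      rw [uIcc_of_le huv.le] at hτ
      have hτ0 : 0 < τ := lt_of_lt_of_le hu0 hτ.1
      simp only [hW]
      rw [Real.log_div (ne_of_gt hTpos) (ne_of_gt hτ0), one_div]
    have habs_cont : ContinuousOn (fun τ => |x' τ * τ - (x v - x u) / (v - u) * v|) (Icc a b) :=
      ((hx'cont.mul (continuousOn_id)).sub continuousOn_const).abs
    have hWmeas : Measurable W :=
      ((measurable_const.sub Real.measurable_log).pow measurable_const).mul measurable_inv
    have hIocsub : Ioc u v ⊆ Icc a b := fun τ hτ => hIccsub (Ioc_subset_Icc_self hτ)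
    have hFint : IntervalIntegrable
        (fun τ => W τ * |x' τ * τ - (x v - x u) / (v - u) * v|) volume u v := by
      rw [intervalIntegrable_iff_integrableOn_Ioc_of_le huv.le]
      have hmaj : IntegrableOn (fun τ => W τ * (C' * (v - u))) (Ioc u v) := by
        have h := hWint.mul_const (C' * (v - u))
        rwa [intervalIntegrable_iff_integrableOn_Ioc_of_le huv.le] at h
      apply MeasureTheory.Integrable.mono' hmaj
      · exact (hWmeas.aestronglyMeasurable).mul
          (((habs_cont.mono hIocsub)).aestronglyMeasurable measurableSet_Ioc)
      · filter_upwards [MeasureTheory.ae_restrict_mem measurableSet_Ioc] with τ hτ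
        have hτI : τ ∈ Icc u v := Ioc_subset_Icc_self hτ
        rw [Real.norm_eq_abs, abs_of_nonneg (mul_nonneg (hWnn τ hτI) (abs_nonneg _))]
        exact mul_le_mul_of_nonneg_left (hpt τ hτI) (hWnn τ hτI)
    have hle1 : (∫ τ in u..v, W τ * |x' τ * τ - (x v - x u) / (v - u) * v|)
        ≤ ∫ τ in u..v, W τ * (C' * (v - u)) := by
      apply intervalIntegral.integral_mono_on huv.le hFint (hWint.mul_const _)
      intro τ hτ
      exact mul_le_mul_of_nonneg_left (hpt τ hτ) (hWnn τ hτ)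
    have hval : (∫ τ in u..v, W τ * (C' * (v - u)))
        = ((Real.log (t N) - Real.log u) ^ p - (Real.log (t N) - Real.log v) ^ p) / p
          * (C' * (v - u)) := by
      rw [intervalIntegral.integral_mul_const, hWval]
    have hLu : Real.log (t N) - Real.log u = (((N : ℝ) - (k : ℝ)) + 1) * ΔT := by
      rw [hu, hlogt, hlogt]
      have hcast : ((k - 1 : ℕ) : ℝ) = (k : ℝ) - 1 := by
        rw [Nat.cast_sub hk1]; simp
      rw [hcast]; ring
    have hLv : Real.log (t N) - Real.log v = ((N : ℝ) - (k : ℝ)) * ΔT := by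
      rw [hv, hlogt, hlogt]; ring
    have hm : (0 : ℝ) ≤ (N : ℝ) - (k : ℝ) := by
      have : (k : ℝ) ≤ (N : ℝ) := by exact_mod_cast hkN
      linarith
    have hbr : (Real.log (t N) - Real.log u) ^ p - (Real.log (t N) - Real.log v) ^ p ≤ ΔT ^ p := by
      rw [hLu, hLv, Real.mul_rpow (by linarith) hΔT.le, Real.mul_rpow hm hΔT.le]
      have hs := sub_rpow_le_one hm hppos.le (by rw [hpdef]; linarith)
      nlinarith [Real.rpow_nonneg hΔT.le p]
    have hvu : (0:ℝ) ≤ v - u := by linarith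
    calc (∫ τ in u..v, Real.log (t N / τ) ^ (-α) * (1 / τ)
          * |x' τ * τ - (x v - x u) / (v - u) * v|)
        = ∫ τ in u..v, W τ * |x' τ * τ - (x v - x u) / (v - u) * v| := hcongr
      _ ≤ ∫ τ in u..v, W τ * (C' * (v - u)) := hle1
      _ = ((Real.log (t N) - Real.log u) ^ p - (Real.log (t N) - Real.log v) ^ p) / p
          * (C' * (v - u)) := hval
      _ ≤ ΔT ^ p / p * (C' * (v - u)) := by
          exact mul_le_mul_of_nonneg_right (by gcongr) (mul_nonneg hC'nn hvu)
      _ = C' * ΔT ^ p / p * (v - u) := by ring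
  -- telescoping
  have htel : ∀ m : ℕ, (∑ k ∈ Finset.Icc 1 m, (t k - t (k - 1))) = t m - t 0 := by
    intro m
    induction m with
    | zero => simp
    | succ m ih =>
      rw [Finset.sum_Icc_succ_top (Nat.le_add_left 1 m), ih]
      simp only [Nat.add_sub_cancel]
      ring
  have hsum : (∑ k ∈ Finset.Icc 1 N,
      ∫ τ in (t (k - 1))..(t k), Real.log (t N / τ) ^ (-α) * (1 / τ)
        * |x' τ * τ - (x (t k) - x (t (k - 1))) / (t k - t (k - 1)) * t k|)
      ≤ C' * ΔT ^ p / p * (t N - a) := by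
    calc (∑ k ∈ Finset.Icc 1 N,
        ∫ τ in (t (k - 1))..(t k), Real.log (t N / τ) ^ (-α) * (1 / τ)
          * |x' τ * τ - (x (t k) - x (t (k - 1))) / (t k - t (k - 1)) * t k|)
        ≤ ∑ k ∈ Finset.Icc 1 N, C' * ΔT ^ p / p * (t k - t (k - 1)) :=
          Finset.sum_le_sum key
      _ = C' * ΔT ^ p / p * ∑ k ∈ Finset.Icc 1 N, (t k - t (k - 1)) := by
          rw [Finset.mul_sum]
      _ = C' * ΔT ^ p / p * (t N - a) := by rw [htel, ht0]
  have htNa : t N - a = a * (Real.exp (N * ΔT) - 1) := by rw [ht]; ring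
  have he1 : 0 ≤ Real.exp ((N : ℝ) * ΔT) - 1 := by
    have h0 : (0 : ℝ) ≤ (N : ℝ) * ΔT := mul_nonneg (Nat.cast_nonneg N) hΔT.le
    linarith [Real.one_le_exp h0]
  have hΔp : 0 ≤ ΔT ^ p := Real.rpow_nonneg hΔT.le p
  have hCle : C' ≤ M₁ + 3 / 2 * M₂ * b := by rw [hC']; have := mul_nonneg hM2nn hb.le; linarith
  have hKnn : 0 ≤ a * ΔT ^ p * (Real.exp ((N : ℝ) * ΔT) - 1) / (p * Real.Gamma p) :=
    div_nonneg (mul_nonneg (mul_nonneg ha.le hΔp) he1) (mul_nonneg hppos.le hΓ1.le)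
  calc (1 / Real.Gamma p) * ∑ k ∈ Finset.Icc 1 N,
        ∫ τ in (t (k - 1))..(t k), Real.log (t N / τ) ^ (-α) * (1 / τ)
          * |x' τ * τ - (x (t k) - x (t (k - 1))) / (t k - t (k - 1)) * t k|
      ≤ (1 / Real.Gamma p) * (C' * ΔT ^ p / p * (t N - a)) :=
        mul_le_mul_of_nonneg_left hsum (div_nonneg zero_le_one hΓ1.le)
    _ = C' * (a * ΔT ^ p * (Real.exp ((N : ℝ) * ΔT) - 1) / (p * Real.Gamma p)) := by
        rw [htNa, final_algebra (ne_of_gt hΓ1) (ne_of_gt hppos)]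
    _ ≤ (M₁ + 3 / 2 * M₂ * b) * (a * ΔT ^ p * (Real.exp ((N : ℝ) * ΔT) - 1)
          / (p * Real.Gamma p)) := mul_le_mul_of_nonneg_right hCle hKnn
    _ = (M₁ + 3 / 2 * M₂ * b) / Real.Gamma (2 - α) * a * ΔT ^ p
          * (Real.exp ((N : ℝ) * ΔT) - 1) := by
        rw [hΓ2]; ring
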